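/- Let A, F be complex n×n matrices and let H be a complex N×N matrix. Then the spectrum of the Nn×Nn matrix I_N ⊗ A − H ⊗ F equals the union, over all eigenvalues λ of H, of the spectra of the matrices A − λ·F. -/

import Mathlib

open Matrix Kronecker Polynomial

lemma mem_spec_det_iff {m : Type*} [Fintype m] [DecidableEq m] (M : Matrix m m ℂ) (x : ℂ) :
    x ∈ spectrum ℂ M ↔ (x • (1 : Matrix m m ℂ) - M).det = 0 := by
  rw [spectrum.mem_iff, Algebra.algebraMap_eq_smul_one, Matrix.isUnit_iff_isUnit_det,
    isUnit_iff_ne_zero, not_ne_iff]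

lemma mem_spec_eig_iff {m : Type*} [Fintype m] [DecidableEq m] (M : Matrix m m ℂ) (x : ℂ) :
    x ∈ spectrum ℂ M ↔ ∃ v ≠ 0, M *ᵥ v = x • v := by
  rw [mem_spec_det_iff, ← Matrix.exists_mulVec_eq_zero_iff]
  constructor <;> rintro ⟨v, hv, h⟩ <;> refine ⟨v, hv, ?_⟩ <;>
    rw [sub_mulVec, smul_mulVec, one_mulVec] at * <;>
    [skip; skip] <;> first
      | (rw [sub_eq_zero] at h; exact h.symm)
      | (rw [sub_eq_zero]; exact h.symm)

lemma kron_eig {n N : ℕ} (A F : Matrix (Fin n) (Fin n) ℂ) (H : Matrix (Fin N) (Fin N) ℂ)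
    (lam μ : ℂ) (v : Fin N → ℂ) (x : Fin n → ℂ) (hv : H *ᵥ v = lam • v)
    (hx : (A - lam • F) *ᵥ x = μ • x) :
    ((1 : Matrix (Fin N) (Fin N) ℂ) ⊗ₖ A - H ⊗ₖ F) *ᵥ (fun p => v p.1 * x p.2)
      = μ • fun p : Fin N × Fin n => v p.1 * x p.2 := by
  funext ⟨i, j⟩
  have hvi : ∑ k, H i k * v k = lam * v i := congrFun hv i
  have hxj : (∑ l, A j l * x l) - lam * ∑ l, F j l * x l = μ * x j := by
    have := congrFun hx j
    simp only [mulVec, dotProduct, Pi.smul_apply, smul_eq_mul] at this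
    rw [← this]
    simp only [Matrix.sub_apply, Matrix.smul_apply, smul_eq_mul, sub_mul,
      Finset.sum_sub_distrib, Finset.mul_sum, mul_assoc]
  calc (((1 : Matrix (Fin N) (Fin N) ℂ) ⊗ₖ A - H ⊗ₖ F) *ᵥ fun p => v p.1 * x p.2) (i, j)
      = ∑ k, ∑ l, ((1 : Matrix (Fin N) (Fin N) ℂ) i k * A j l - H i k * F j l) * (v k * x l) := by
        simp [mulVec, dotProduct, Fintype.sum_prod_type, kroneckerMap_apply]
    _ = (∑ k, ∑ l, ((1 : Matrix (Fin N) (Fin N) ℂ) i k * v k) * (A j l * x l))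
        - ∑ k, ∑ l, (H i k * v k) * (F j l * x l) := by
        rw [← Finset.sum_sub_distrib]
        congr 1; funext k
        rw [← Finset.sum_sub_distrib]
        congr 1; funext l
        ring
    _ = v i * (∑ l, A j l * x l) - (lam * v i) * ∑ l, F j l * x l := by
        have h1v : ∑ k, (1 : Matrix (Fin N) (Fin N) ℂ) i k * v k = v i := by
          simpa [mulVec, dotProduct] using congrFun (one_mulVec v) i
        rw [← Finset.sum_mul_sum, ← Finset.sum_mul_sum, h1v, hvi]
    _ = v i * ((∑ l, A j l * x l) - lam * ∑ l, F j l * x l) := by ring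
    _ = μ • (v i * x j) := by rw [hxj]; ring_nf

set_option maxHeartbeats 1000000 in
/-- spectral decomposition behind the paper's Lemma 2:
the spectrum of `I_N ⊗ A - H ⊗ F` is the union, over the eigenvalues `λ` of
`H`, of the spectra of the matrices `A - λ • F`. -/
theorem spectrum_kronecker_eq_union {n N : ℕ}
    (A F : Matrix (Fin n) (Fin n) ℂ) (H : Matrix (Fin N) (Fin N) ℂ) :
    spectrum ℂ ((1 : Matrix (Fin N) (Fin N) ℂ) ⊗ₖ A - H ⊗ₖ F) =
      ⋃ lam ∈ spectrum ℂ H, spectrum ℂ (A - lam • F) := by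
  ext μ
  simp only [Set.mem_iUnion, exists_prop]
  constructor
  · intro hμ
    by_contra hc
    push_neg at hc
    set G : Matrix (Fin n) (Fin n) ℂ[X] :=
      (μ • (1 : Matrix (Fin n) (Fin n) ℂ) - A).map C + F.map (fun a => C a * X) with hG
    set p : ℂ[X] := G.det with hp
    have hev : ∀ lam : ℂ,
        p.eval lam = (μ • (1 : Matrix (Fin n) (Fin n) ℂ) - (A - lam • F)).det := by
      intro lam
      have h1 : G.map (⇑(evalRingHom lam)) =
          μ • (1 : Matrix (Fin n) (Fin n) ℂ) - (A - lam • F) := by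
        ext j l
        simp only [hG, Matrix.map_apply, Matrix.add_apply, Matrix.sub_apply, Matrix.smul_apply,
          Matrix.one_apply, coe_evalRingHom, eval_add, eval_mul, eval_C, eval_X, smul_eq_mul]
        by_cases hjl : j = l <;> simp [hjl] <;> ring
      rw [hp, show G.det.eval lam = (evalRingHom lam) G.det from rfl,
        RingHom.map_det, RingHom.mapMatrix_apply, h1]
    have hne : ∀ lam ∈ spectrum ℂ H, p.eval lam ≠ 0 := by
      intro lam hlam h0
      exact hc lam hlam ((mem_spec_det_iff _ _).mpr (by rw [← hev lam]; exact h0))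
    have hunit : IsUnit (Polynomial.aeval H p) := by
      rcases isEmpty_or_nonempty (Fin N) with hN | hN
      · exact isUnit_of_subsingleton _
      · have hnon := spectrum.nonempty_of_isAlgClosed_of_finiteDimensional ℂ H
        have h0 : (0 : ℂ) ∉ spectrum ℂ (Polynomial.aeval H p) := by
          rw [spectrum.map_polynomial_aeval_of_nonempty H p hnon]
          rintro ⟨lam, hlam, hl⟩
          exact hne lam hlam hl
        rwa [spectrum.zero_notMem_iff] at h0
    let Φ : ℂ[X] →+* Matrix (Fin N) (Fin N) ℂ := (Polynomial.aeval H).toRingHom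
    let Ψ : Matrix (Fin n) (Fin n) ℂ[X] →+* Matrix (Fin N × Fin n) (Fin N × Fin n) ℂ :=
      ((reindexAlgEquiv ℂ ℂ (Equiv.prodComm (Fin n) (Fin N))).toRingEquiv.toRingHom).comp
        (((compRingEquiv (Fin n) (Fin N) ℂ).toRingHom).comp Φ.mapMatrix)
    have hΨent : ∀ (M : Matrix (Fin n) (Fin n) ℂ[X]) (i k : Fin N) (j l : Fin n),
        Ψ M (i, j) (k, l) = Φ (M j l) i k := by
      intro M i k j l
      simp [Ψ, reindexAlgEquiv_apply, Matrix.reindex_apply, Matrix.submatrix_apply,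
        Matrix.compRingEquiv_apply, RingHom.mapMatrix_apply, Matrix.map_apply]
    have hΨG : Ψ G = μ • 1 - ((1 : Matrix (Fin N) (Fin N) ℂ) ⊗ₖ A - H ⊗ₖ F) := by
      ext ⟨i, j⟩ ⟨k, l⟩
      rw [hΨent]
      simp only [hG, Matrix.add_apply, Matrix.map_apply, Matrix.sub_apply, Matrix.smul_apply,
        Matrix.one_apply, smul_eq_mul, Φ, Polynomial.C_mul', map_add, _root_.map_smul,
        AlgHom.toRingHom_eq_coe, RingHom.coe_coe, Polynomial.aeval_C, Polynomial.aeval_X,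
        kroneckerMap_apply, Matrix.algebraMap_matrix_apply, Prod.mk.injEq]
      by_cases hik : i = k <;> by_cases hjl : j = l <;>
        simp [hik, hjl, Matrix.one_apply, Matrix.add_apply, Matrix.mul_apply] <;> ring
    have hΨ1 : Ψ (p • 1) = (Polynomial.aeval H p) ⊗ₖ (1 : Matrix (Fin n) (Fin n) ℂ) := by
      ext ⟨i, j⟩ ⟨k, l⟩
      rw [hΨent]
      simp only [Matrix.smul_apply, Matrix.one_apply, smul_eq_mul, kroneckerMap_apply, Φ,
        AlgHom.toRingHom_eq_coe, RingHom.coe_coe]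
      by_cases hjl : j = l <;> simp [hjl]
    have key : (μ • 1 - ((1 : Matrix (Fin N) (Fin N) ℂ) ⊗ₖ A - H ⊗ₖ F)) * Ψ G.adjugate
        = (Polynomial.aeval H p) ⊗ₖ (1 : Matrix (Fin n) (Fin n) ℂ) := by
      rw [← hΨG, ← _root_.map_mul, Matrix.mul_adjugate, ← hp, hΨ1]
    have hdetbig : IsUnit (μ • (1 : Matrix (Fin N × Fin n) (Fin N × Fin n) ℂ)
        - ((1 : Matrix (Fin N) (Fin N) ℂ) ⊗ₖ A - H ⊗ₖ F)) := by
      rw [Matrix.isUnit_iff_isUnit_det, isUnit_iff_ne_zero]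
      intro hdz
      have hd := congrArg Matrix.det key
      rw [Matrix.det_mul, hdz, zero_mul, Matrix.det_kronecker, Matrix.det_one, one_pow,
        mul_one] at hd
      have hu : (Polynomial.aeval H p).det ≠ 0 := by
        rw [← isUnit_iff_ne_zero, ← Matrix.isUnit_iff_isUnit_det]; exact hunit
      exact pow_ne_zero _ hu hd.symm
    rw [spectrum.mem_iff, Algebra.algebraMap_eq_smul_one] at hμ
    exact hμ hdetbig
  · rintro ⟨lam, hlam, hmu⟩
    rw [mem_spec_eig_iff] at hlam hmu
    obtain ⟨v, hv0, hv⟩ := hlam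
    obtain ⟨x, hx0, hx⟩ := hmu
    rw [mem_spec_eig_iff]
    refine ⟨fun q => v q.1 * x q.2, ?_, kron_eig A F H lam μ v x hv hx⟩
    obtain ⟨i, hi⟩ := Function.ne_iff.mp hv0
    obtain ⟨j, hj⟩ := Function.ne_iff.mp hx0
    intro h
    exact mul_ne_zero (by simpa using hi) (by simpa using hj) (congrFun h (i, j))
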